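/- Let E, T, H be real Banach spaces of dimension at least 2, let D ⊊ E, G ⊊ T, Ω ⊊ H be proper domains, and let M, L ≥ 1 and ϑ ∈ (0,1). If f : D → G is an M-QH homeomorphism and g : G → Ω is an (L,ϑ)-locally bilipschitz homeomorphism, then g ∘ f : D → Ω is (L',ϑ')-locally bilipschitz with L' and ϑ' depending only on M, L and ϑ. -/

import Mathlib

open Set Metric Topology

noncomputable section

universe u v w

/-- A control function: a self-homeomorphism of `[0,∞)`. -/
def CtrlFun (η : ℝ → ℝ) : Prop :=
  η 0 = 0 ∧ StrictMonoOn η (Set.Ici 0) ∧ ContinuousOn η (Set.Ici 0) ∧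
    Set.SurjOn η (Set.Ici 0) (Set.Ici 0)

/-- A domain: a nonempty open connected set. -/
def IsRegion {E : Type u} [TopologicalSpace E] (D : Set E) : Prop :=
  IsOpen D ∧ IsConnected D

/-- A proper domain. -/
def IsProperDomain {E : Type u} [TopologicalSpace E] (D : Set E) : Prop :=
  IsRegion D ∧ D ≠ Set.univ

section MetricDefs

variable {X : Type u} {Y : Type v} [MetricSpace X] [MetricSpace Y]

/-- The cross ratio of four points. -/
def crRatio (x y z w : X) : ℝ :=
  (dist x z * dist y w) / (dist x y * dist z w)

/-- The Bonk-Kleiner quantity `⟨x,y,z,w⟩`. -/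
def bkRatio (x y z w : X) : ℝ :=
  min (dist x z) (dist y w) / min (dist x y) (dist z w)

/-- `f` is `η`-quasisymmetric on `s`. -/
def QSOn (η : ℝ → ℝ) (f : X → Y) (s : Set X) : Prop :=
  ∀ x ∈ s, ∀ y ∈ s, ∀ z ∈ s, x ≠ y → x ≠ z → y ≠ z →
    dist (f x) (f y) / dist (f x) (f z) ≤ η (dist x y / dist x z)

/-- `f` is `θ`-quasimöbius on `s`. -/
def QMOn (θ : ℝ → ℝ) (f : X → Y) (s : Set X) : Prop :=
  ∀ x ∈ s, ∀ y ∈ s, ∀ z ∈ s, ∀ w ∈ s,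
    x ≠ y → x ≠ z → x ≠ w → y ≠ z → y ≠ w → z ≠ w →
    crRatio (f x) (f y) (f z) (f w) ≤ θ (crRatio x y z w)

/-- `f` is `θ`-quasimöbius on `s` relative to `A`. -/
def QMRelOn (θ : ℝ → ℝ) (f : X → Y) (s A : Set X) : Prop :=
  ∀ x ∈ s, ∀ y ∈ s, ∀ z ∈ s, ∀ w ∈ s,
    x ≠ y → x ≠ z → x ≠ w → y ≠ z → y ≠ w → z ≠ w →
    ((x ∈ A ∧ w ∈ A) ∨ (y ∈ A ∧ z ∈ A)) →
    crRatio (f x) (f y) (f z) (f w) ≤ θ (crRatio x y z w)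

/-- `f` is `L`-bilipschitz on `s`. -/
def BilipOn (L : ℝ) (f : X → Y) (s : Set X) : Prop :=
  ∀ x ∈ s, ∀ y ∈ s,
    dist x y / L ≤ dist (f x) (f y) ∧ dist (f x) (f y) ≤ L * dist x y

/-- The `λ`-three-point condition for `f : X → Y` between bounded spaces. -/
def ThreePointCond (lam : ℝ) (f : X → Y) : Prop :=
  ∃ z₁ z₂ z₃ : X,
    (Metric.diam (Set.univ : Set X) / lam ≤ dist z₁ z₂ ∧
     Metric.diam (Set.univ : Set X) / lam ≤ dist z₁ z₃ ∧
     Metric.diam (Set.univ : Set X) / lam ≤ dist z₂ z₃) ∧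
    (Metric.diam (Set.univ : Set Y) / lam ≤ dist (f z₁) (f z₂) ∧
     Metric.diam (Set.univ : Set Y) / lam ≤ dist (f z₁) (f z₃) ∧
     Metric.diam (Set.univ : Set Y) / lam ≤ dist (f z₂) (f z₃))

/-- The subset `A` of a metric space is `C`-uniformly perfect. -/
def UnifPerfect (C : ℝ) (A : Set X) : Prop :=
  ∀ x ∈ A, ∀ r : ℝ, 0 < r → (A \ Metric.ball x r).Nonempty →
    ((A ∩ Metric.ball x r) \ Metric.ball x (r / C)).Nonempty

end MetricDefs

/-- `f` is a homeomorphism from `s` onto `t`. -/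
def HomeoOn {X : Type u} {Y : Type v} [TopologicalSpace X] [TopologicalSpace Y]
    (f : X → Y) (s : Set X) (t : Set Y) : Prop :=
  Set.BijOn f s t ∧ ContinuousOn f s ∧
    ∃ g : Y → X, Set.BijOn g t s ∧ ContinuousOn g t ∧
      Set.EqOn (g ∘ f) id s ∧ Set.EqOn (f ∘ g) id t

section BanachDefs

variable {E : Type u} {E' : Type v} [NormedAddCommGroup E] [NormedSpace ℝ E]
  [NormedAddCommGroup E'] [NormedSpace ℝ E']

/-- Distance to the boundary of `D`. -/
def bdist (D : Set E) (x : E) : ℝ := Metric.infDist x (frontier D)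

/-- Quasihyperbolic length of a curve `γ` (restricted to `[0,1]`) in `D`. -/
def qhLength (D : Set E) (γ : ℝ → E) : ℝ :=
  ∫ t in (0:ℝ)..1, ‖deriv γ t‖ / bdist D (γ t)

/-- The quasihyperbolic metric of `D`: infimum of quasihyperbolic lengths of
curves in `D` joining `x` to `y`. -/
def qhDist (D : Set E) (x y : E) : ℝ :=
  sInf { l : ℝ | ∃ γ : ℝ → E, ContDiff ℝ 1 γ ∧ γ 0 = x ∧ γ 1 = y ∧
    (∀ t ∈ Set.Icc (0:ℝ) 1, γ t ∈ D) ∧ l = qhLength D γ }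

/-- `D` is a `c`-uniform domain: every pair of points can be joined by an
arclength-parametrized (i.e. `1`-Lipschitz) curve satisfying the two cigar
conditions. -/
def IsUniformDomain (c : ℝ) (D : Set E) : Prop :=
  ∀ x ∈ D, ∀ y ∈ D, ∃ ℓ : ℝ, 0 ≤ ℓ ∧ ∃ γ : ℝ → E,
    γ 0 = x ∧ γ ℓ = y ∧ (∀ t ∈ Set.Icc 0 ℓ, γ t ∈ D) ∧
    LipschitzOnWith 1 γ (Set.Icc 0 ℓ) ∧
    ℓ ≤ c * dist x y ∧
    ∀ t ∈ Set.Icc 0 ℓ, min t (ℓ - t) ≤ c * bdist D (γ t)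

/-- `f : D → D'` is `C`-coarsely `M`-quasihyperbolic. -/
def IsCQH (M C : ℝ) (D : Set E) (D' : Set E') (f : E → E') : Prop :=
  ∀ x ∈ D, ∀ y ∈ D,
    qhDist D x y / M - C ≤ qhDist D' (f x) (f y) ∧
    qhDist D' (f x) (f y) ≤ M * qhDist D x y + C

/-- `f : D → D'` is an `M`-quasihyperbolic (`M`-QH) map. -/
def IsQHMap (M : ℝ) (D : Set E) (D' : Set E') (f : E → E') : Prop :=
  ∀ x ∈ D, ∀ y ∈ D,
    qhDist D x y / M ≤ qhDist D' (f x) (f y) ∧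
    qhDist D' (f x) (f y) ≤ M * qhDist D x y

/-- `f : D → D'` is freely `φ`-quasiconformal. -/
def IsFQC (φ : ℝ → ℝ) (D : Set E) (D' : Set E') (f : E → E') : Prop :=
  ∀ G : Set E, G ⊆ D → IsRegion G →
    ∀ x ∈ G, ∀ y ∈ G,
      qhDist (f '' G) (f x) (f y) ≤ φ (qhDist G x y) ∧
      qhDist G x y ≤ φ (qhDist (f '' G) (f x) (f y))

/-- `f : D → D'` is `(L,ϑ)`-locally bilipschitz. -/
def LocBilip (L ϑ : ℝ) (D : Set E) (f : E → E') : Prop :=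
  ∀ x ∈ D, ∃ c : ℝ, 0 < c ∧
    ∀ y ∈ Metric.ball x (ϑ * bdist D x), ∀ z ∈ Metric.ball x (ϑ * bdist D x),
      (c / L) * dist y z ≤ dist (f y) (f z) ∧ dist (f y) (f z) ≤ L * c * dist y z

end BanachDefs

/-! ### The one-point extension `Ė = E ∪ {∞}` -/

/-- The one-point extension of `E`. -/
inductive OnePt (E : Type u) : Type u where
  | infty : OnePt E
  | of : E → OnePt E

namespace OnePt

variable {E : Type u} {E' : Type v} [NormedAddCommGroup E] [NormedAddCommGroup E']

/-- The topology of the one-point extension: neighborhoods of `∞` are the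
complements of closed bounded sets of `E`. -/
instance : TopologicalSpace (OnePt E) :=
  TopologicalSpace.generateFrom
    ({ s | ∃ U : Set E, IsOpen U ∧ s = OnePt.of '' U } ∪
     { s | ∃ B : Set E, IsClosed B ∧ Bornology.IsBounded B ∧
        s = insert OnePt.infty (OnePt.of '' Bᶜ) })

/-- The closure of `D ⊆ E` taken in the one-point extension. -/
def cl (D : Set E) : Set (OnePt E) := closure (OnePt.of '' D)

/-- The boundary of `D ⊆ E` taken in the one-point extension. -/
def bd (D : Set E) : Set (OnePt E) := frontier (OnePt.of '' D)

/-- The extended ratio `|x−y|/|x−z|` of a triple in the one-point extension;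
ratios involving `∞` are obtained by deleting the distances containing `∞`
(the value at non-distinct triples containing two `∞`'s is junk). -/
def ratioB : OnePt E → OnePt E → OnePt E → ENNReal
  | of x, of y, of z => ENNReal.ofReal (dist x y / dist x z)
  | infty, _, _ => 1
  | of _, infty, _ => ⊤
  | of _, of _, infty => 0

/-- The extended cross ratio of a quadruple in the one-point extension;
cross ratios involving `∞` are obtained by deleting the two distances
containing `∞` (the value at non-distinct quadruples with two `∞`'s is junk). -/
def crB : OnePt E → OnePt E → OnePt E → OnePt E → ℝ
  | of x, of y, of z, of w => (dist x z * dist y w) / (dist x y * dist z w)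
  | infty, of y, of z, of w => dist y w / dist z w
  | of x, infty, of z, of w => dist x z / dist z w
  | of x, of y, infty, of w => dist y w / dist x y
  | of x, of y, of z, infty => dist x z / dist x y
  | _, _, _, _ => 0

/-- Extension of a control function to `[0,∞]`. -/
def etaExt (η : ℝ → ℝ) : ENNReal → ENNReal :=
  fun t => if t = ⊤ then ⊤ else ENNReal.ofReal (η t.toReal)

/-- `F` is `η`-quasisymmetric on `s ⊆ Ė`. -/
def QSOnB (η : ℝ → ℝ) (F : OnePt E → OnePt E') (s : Set (OnePt E)) : Prop :=
  ∀ x ∈ s, ∀ y ∈ s, ∀ z ∈ s, x ≠ y → x ≠ z → y ≠ z →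
    ratioB (F x) (F y) (F z) ≤ etaExt η (ratioB x y z)

/-- `F` is `η`-quasisymmetric on `s ⊆ Ė` relative to `A`. -/
def QSRelB (η : ℝ → ℝ) (F : OnePt E → OnePt E') (s A : Set (OnePt E)) : Prop :=
  ∀ x ∈ s, ∀ y ∈ s, ∀ z ∈ s, x ≠ y → x ≠ z → y ≠ z →
    (x ∈ A ∨ (y ∈ A ∧ z ∈ A)) →
    ratioB (F x) (F y) (F z) ≤ etaExt η (ratioB x y z)

/-- `F` is `θ`-quasimöbius on `s ⊆ Ė`. -/
def QMOnB (θ : ℝ → ℝ) (F : OnePt E → OnePt E') (s : Set (OnePt E)) : Prop :=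
  ∀ x ∈ s, ∀ y ∈ s, ∀ z ∈ s, ∀ w ∈ s,
    x ≠ y → x ≠ z → x ≠ w → y ≠ z → y ≠ w → z ≠ w →
    crB (F x) (F y) (F z) (F w) ≤ θ (crB x y z w)

/-- `F` is `θ`-quasimöbius on `s ⊆ Ė` relative to `A`. -/
def QMRelB (θ : ℝ → ℝ) (F : OnePt E → OnePt E') (s A : Set (OnePt E)) : Prop :=
  ∀ x ∈ s, ∀ y ∈ s, ∀ z ∈ s, ∀ w ∈ s,
    x ≠ y → x ≠ z → x ≠ w → y ≠ z → y ≠ w → z ≠ w →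
    ((x ∈ A ∧ w ∈ A) ∨ (y ∈ A ∧ z ∈ A)) →
    crB (F x) (F y) (F z) (F w) ≤ θ (crB x y z w)

end OnePt



/-! ### Auxiliary lemmas -/

set_option maxHeartbeats 1000000
set_option linter.unusedSectionVars false

section AuxQH

variable {E : Type u} [NormedAddCommGroup E] [NormedSpace ℝ E]

def qhCurves (D : Set E) (x y : E) : Set ℝ :=
  { l : ℝ | ∃ γ : ℝ → E, ContDiff ℝ 1 γ ∧ γ 0 = x ∧ γ 1 = y ∧
    (∀ t ∈ Set.Icc (0:ℝ) 1, γ t ∈ D) ∧ l = qhLength D γ }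

theorem qhDist_eq (D : Set E) (x y : E) : qhDist D x y = sInf (qhCurves D x y) := rfl

theorem frontier_nonempty {D : Set E} (h : IsProperDomain D) : (frontier D).Nonempty :=
  nonempty_frontier_iff.2 ⟨h.1.2.nonempty, h.2⟩


theorem bdist_pos {D : Set E} (h : IsProperDomain D) {x : E} (hx : x ∈ D) : 0 < bdist D x := by
  rw [bdist, ← isClosed_frontier.notMem_iff_infDist_pos (frontier_nonempty h)]
  intro hmem
  have := h.1.1.frontier_eq ▸ hmem
  exact this.2 hx



theorem bdist_le (D : Set E) (x y : E) : bdist D x ≤ bdist D y + dist x y :=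
  Metric.infDist_le_infDist_add_dist

open Set.Notation in
theorem ball_bdist_subset {D : Set E} (h : IsProperDomain D) {x : E} (hx : x ∈ D) :
    Metric.ball x (bdist D x) ⊆ D := by
  set s := Metric.ball x (bdist D x) with hs
  have hdisj : Disjoint (frontier D) s := by
    rw [Set.disjoint_left]
    intro p hp hps
    exact absurd (Metric.infDist_le_dist_of_mem hp) (by
      rw [dist_comm]; exact not_le.2 (Metric.mem_ball.1 hps))
  have hclopen : IsClopen (s ↓∩ D) := isClopen_preimage_val h.1.1 hdisj
  have hxs : x ∈ s := Metric.mem_ball_self (bdist_pos h hx)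
  haveI : PreconnectedSpace s := Subtype.preconnectedSpace ((convex_ball x _).isPreconnected)
  have huniv : (s ↓∩ D) = univ := hclopen.eq_univ ⟨⟨x, hxs⟩, hx⟩
  intro p hp
  have : (⟨p, hp⟩ : s) ∈ (s ↓∩ D) := huniv ▸ mem_univ _
  exact this

theorem qhLength_nonneg (D : Set E) (γ : ℝ → E) : 0 ≤ qhLength D γ := by
  apply intervalIntegral.integral_nonneg (by norm_num)
  intro u _
  exact div_nonneg (norm_nonneg _) (Metric.infDist_nonneg)

theorem qhCurves_bddBelow (D : Set E) (x y : E) : BddBelow (qhCurves D x y) := by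
  refine ⟨0, fun l hl => ?_⟩
  obtain ⟨γ, -, -, -, -, rfl⟩ := hl
  exact qhLength_nonneg D γ

theorem qhDist_nonneg (D : Set E) (x y : E) : 0 ≤ qhDist D x y := by
  rcases Set.eq_empty_or_nonempty (qhCurves D x y) with h | h
  · rw [qhDist_eq, h, Real.sInf_empty]
  · exact le_csInf h (fun l hl => by
      obtain ⟨γ, -, -, -, -, rfl⟩ := hl; exact qhLength_nonneg D γ)

theorem qh_segment {D : Set E} (h : IsProperDomain D) {y z : E} (hy : y ∈ D)
    (hz : dist y z < bdist D y) :
    (qhCurves D y z).Nonempty ∧ qhDist D y z ≤ dist y z / (bdist D y - dist y z) := by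
  set γ : ℝ → E := fun t => y + t • (z - y) with hγdef
  have hderiv : ∀ t : ℝ, HasDerivAt γ (z - y) t := fun t => by
    simpa [hγdef] using ((hasDerivAt_id t).smul_const (z - y)).const_add y
  have hderiv' : ∀ t : ℝ, deriv γ t = z - y := fun t => (hderiv t).deriv
  have hcd : ContDiff ℝ 1 γ := by
    exact contDiff_const.add ((contDiff_id).smul contDiff_const)
  have hdst : ∀ t ∈ Set.Icc (0:ℝ) 1, dist y (γ t) ≤ dist y z := by
    intro t ht
    calc dist y (γ t) = |t| * ‖z - y‖ := by
          rw [hγdef]; rw [dist_eq_norm]; simp [norm_smul]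
      _ ≤ 1 * ‖z - y‖ := by
          apply mul_le_mul_of_nonneg_right _ (norm_nonneg _)
          rw [abs_le]; constructor <;> linarith [ht.1, ht.2]
      _ = dist y z := by rw [one_mul, dist_eq_norm, norm_sub_rev]
  have hmem : ∀ t ∈ Set.Icc (0:ℝ) 1, γ t ∈ D := by
    intro t ht
    apply ball_bdist_subset h hy
    rw [Metric.mem_ball, dist_comm]
    exact lt_of_le_of_lt (hdst t ht) hz
  have hb : ∀ t ∈ Set.Icc (0:ℝ) 1, bdist D y - dist y z ≤ bdist D (γ t) := by
    intro t ht
    have h1 : bdist D y ≤ bdist D (γ t) + dist y (γ t) := bdist_le D y (γ t)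
    have h2 := hdst t ht
    linarith
  have hpos : 0 < bdist D y - dist y z := by linarith
  have hlen : qhLength D γ ≤ dist y z / (bdist D y - dist y z) := by
    have hcont : ContinuousOn (fun t => ‖deriv γ t‖ / bdist D (γ t)) (Set.Icc (0:ℝ) 1) := by
      apply ContinuousOn.div
      · exact (hcd.continuous_deriv le_rfl).norm.continuousOn
      · exact Continuous.continuousOn (by
          exact ((Metric.continuous_infDist_pt (frontier D)).comp (hcd.continuous)))
      · intro t ht
        exact ne_of_gt (lt_of_lt_of_le hpos (hb t ht))
    have hint : IntervalIntegrable (fun t => ‖deriv γ t‖ / bdist D (γ t)) MeasureTheory.volume 0 1 := by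
      apply ContinuousOn.intervalIntegrable
      rwa [Set.uIcc_of_le (by norm_num : (0:ℝ) ≤ 1)]
    calc qhLength D γ ≤ ∫ t in (0:ℝ)..1, dist y z / (bdist D y - dist y z) := by
          apply intervalIntegral.integral_mono_on (by norm_num) hint
            (intervalIntegrable_const)
          intro t ht
          rw [hderiv']
          rw [show ‖z - y‖ = dist y z by rw [dist_eq_norm, norm_sub_rev]]
          exact div_le_div_of_nonneg_left dist_nonneg hpos (hb t ht)
      _ = dist y z / (bdist D y - dist y z) := by simp
  have hmem' : qhLength D γ ∈ qhCurves D y z :=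
    ⟨γ, hcd, by simp [hγdef], by simp [hγdef], hmem, rfl⟩
  exact ⟨⟨_, hmem'⟩, le_trans (csInf_le (qhCurves_bddBelow D y z) hmem') hlen⟩

theorem qh_log_lower [CompleteSpace E] {D : Set E} (h : IsProperDomain D) {a b : E} (ha : a ∈ D)
    (hne : (qhCurves D a b).Nonempty) :
    Real.log (1 + dist a b / bdist D a) ≤ qhDist D a b := by
  apply le_csInf hne
  rintro l ⟨γ, hcd, h0, h1, hmemD, rfl⟩
  have hφcont : Continuous (fun t => ‖deriv γ t‖) := (hcd.continuous_deriv le_rfl).norm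
  set d : ℝ := bdist D a with hd
  have hdpos : 0 < d := bdist_pos h ha
  set s : ℝ → ℝ := fun t => ∫ u in (0:ℝ)..t, ‖deriv γ u‖ with hsdef
  have hsderiv : ∀ t : ℝ, HasDerivAt s (‖deriv γ t‖) t := by
    intro t
    exact intervalIntegral.integral_hasDerivAt_right
      (hφcont.intervalIntegrable 0 t) (hφcont.stronglyMeasurableAtFilter _ _)
      hφcont.continuousAt
  have hscont : Continuous s :=
    continuous_iff_continuousAt.2 fun t => (hsderiv t).continuousAt
  have hs0 : s 0 = 0 := intervalIntegral.integral_same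
  have hsnonneg : ∀ t ∈ Set.Icc (0:ℝ) 1, 0 ≤ s t := by
    intro t ht
    apply intervalIntegral.integral_nonneg ht.1
    intro u _; exact norm_nonneg _
  have hchord : ∀ t ∈ Set.Icc (0:ℝ) 1, dist a (γ t) ≤ s t := by
    intro t ht
    have hft : (∫ u in (0:ℝ)..t, deriv γ u) = γ t - γ 0 := by
      apply intervalIntegral.integral_eq_sub_of_hasDerivAt
      · intro u _
        exact (hcd.differentiable one_ne_zero u).hasDerivAt
      · exact (hcd.continuous_deriv le_rfl).intervalIntegrable 0 t
    calc dist a (γ t) = ‖γ t - γ 0‖ := by rw [h0, dist_eq_norm, norm_sub_rev]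
      _ = ‖∫ u in (0:ℝ)..t, deriv γ u‖ := by rw [hft]
      _ ≤ ∫ u in (0:ℝ)..t, ‖deriv γ u‖ :=
          intervalIntegral.norm_integral_le_integral_norm ht.1
      _ = s t := rfl
  have hds : ∀ t ∈ Set.Icc (0:ℝ) 1, 0 < d + s t := fun t ht => by
    linarith [hsnonneg t ht]
  have hFderiv : ∀ t ∈ Set.uIcc (0:ℝ) 1,
      HasDerivAt (fun u => Real.log (d + s u)) (‖deriv γ t‖ / (d + s t)) t := by
    intro t ht
    rw [Set.uIcc_of_le (by norm_num : (0:ℝ) ≤ 1)] at ht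
    simpa using (((hsderiv t).const_add d).log (ne_of_gt (hds t ht)))
  have hF'cont : ContinuousOn (fun t => ‖deriv γ t‖ / (d + s t)) (Set.Icc (0:ℝ) 1) := by
    apply ContinuousOn.div hφcont.continuousOn
      (continuous_const.add hscont).continuousOn
    intro t ht; exact ne_of_gt (hds t ht)
  have hF'int : IntervalIntegrable (fun t => ‖deriv γ t‖ / (d + s t)) MeasureTheory.volume 0 1 := by
    apply ContinuousOn.intervalIntegrable
    rwa [Set.uIcc_of_le (by norm_num : (0:ℝ) ≤ 1)]
  have hFTC : (∫ t in (0:ℝ)..1, ‖deriv γ t‖ / (d + s t))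
      = Real.log (d + s 1) - Real.log (d + s 0) :=
    intervalIntegral.integral_eq_sub_of_hasDerivAt hFderiv hF'int
  have hIcont : ContinuousOn (fun t => ‖deriv γ t‖ / bdist D (γ t)) (Set.Icc (0:ℝ) 1) := by
    apply ContinuousOn.div hφcont.continuousOn
      (((Metric.continuous_infDist_pt (frontier D)).comp hcd.continuous).continuousOn)
    intro t ht
    exact ne_of_gt (bdist_pos h (hmemD t ht))
  have hIint : IntervalIntegrable (fun t => ‖deriv γ t‖ / bdist D (γ t)) MeasureTheory.volume 0 1 := by
    apply ContinuousOn.intervalIntegrable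
    rwa [Set.uIcc_of_le (by norm_num : (0:ℝ) ≤ 1)]
  have hmono : (∫ t in (0:ℝ)..1, ‖deriv γ t‖ / (d + s t)) ≤ qhLength D γ := by
    apply intervalIntegral.integral_mono_on (by norm_num) hF'int hIint
    intro t ht
    apply div_le_div_of_nonneg_left (norm_nonneg _) (bdist_pos h (hmemD t ht))
    calc bdist D (γ t) ≤ bdist D a + dist (γ t) a := bdist_le D (γ t) a
      _ = d + dist a (γ t) := by rw [dist_comm]
      _ ≤ d + s t := by linarith [hchord t ht]
  have hlog : Real.log (1 + dist a b / d) ≤ Real.log (d + s 1) - Real.log (d + s 0) := by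
    rw [hs0, add_zero]
    have h1d : (1 : ℝ) + dist a b / d = (d + dist a b) / d := by field_simp
    rw [h1d, Real.log_div (by positivity) (ne_of_gt hdpos)]
    have : d + dist a b ≤ d + s 1 := by
      have := hchord 1 (by norm_num)
      rw [h1] at this
      linarith
    gcongr
  linarith

end AuxQH

theorem exp_le_one_add_two_mul' {S : ℝ} (h0 : 0 ≤ S) (h2 : S ≤ 1/2) : Real.exp S ≤ 1 + 2*S := by
  have h := Real.add_one_le_exp (-S)
  rw [Real.exp_neg] at h
  have hp := Real.exp_pos S
  have key : (1 - S) * Real.exp S ≤ 1 := by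
    have h' := mul_le_mul_of_nonneg_right h hp.le
    rw [inv_mul_cancel₀ (ne_of_gt hp)] at h'
    nlinarith [h']
  nlinarith [key, hp]


theorem half_le_log_one_add' {v : ℝ} (h0 : 0 ≤ v) (h1 : v ≤ 1) : v/2 ≤ Real.log (1+v) := by
  have hx : (0:ℝ) < 1 + v := by linarith
  have h := Real.log_le_sub_one_of_pos (inv_pos.2 hx)
  rw [Real.log_inv] at h
  have key : (1+v)⁻¹ ≤ 1 - v/2 := by
    rw [inv_eq_one_div, div_le_iff₀ hx]
    nlinarith
  linarith


theorem stmt_10 :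
    ∀ (M L ϑ : ℝ), 1 ≤ M → 1 ≤ L → ϑ ∈ Set.Ioo (0:ℝ) 1 →
    ∃ L' ϑ' : ℝ, 1 ≤ L' ∧ ϑ' ∈ Set.Ioo (0:ℝ) 1 ∧
      ∀ (E : Type u) (T : Type v) (H : Type w)
        [NormedAddCommGroup E] [NormedSpace ℝ E] [CompleteSpace E]
        [NormedAddCommGroup T] [NormedSpace ℝ T] [CompleteSpace T]
        [NormedAddCommGroup H] [NormedSpace ℝ H] [CompleteSpace H],
        2 ≤ Module.rank ℝ E → 2 ≤ Module.rank ℝ T → 2 ≤ Module.rank ℝ H →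
      ∀ (D : Set E) (G : Set T) (Ω : Set H) (f : E → T) (g : T → H),
        IsProperDomain D → IsProperDomain G → IsProperDomain Ω →
        HomeoOn f D G → HomeoOn g G Ω →
        IsQHMap M D G f → LocBilip L ϑ G g →
        LocBilip L' ϑ' D (g ∘ f) := by
  intro M L ϑ hM hL hϑ
  obtain ⟨hϑ0, hϑ1⟩ := hϑ
  have hM0 : (0:ℝ) < M := by linarith
  have hL0 : (0:ℝ) < L := by linarith
  refine ⟨20*M*L, ϑ/(24*M), by nlinarith, ⟨by positivity, ?_⟩, ?_⟩
  · rw [div_lt_one (by positivity)]; nlinarith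
  intro E T H _ _ _ _ _ _ _ _ _ _ _ _ D G Ω f g hD hG hΩ hf hg hqh hbil
  intro x hx
  have hd : 0 < bdist D x := bdist_pos hD hx
  have hfx : f x ∈ G := hf.1.mapsTo hx
  have hd' : 0 < bdist G (f x) := bdist_pos hG hfx
  have hθd' : ϑ * bdist G (f x) ≤ bdist G (f x) := mul_le_of_le_one_left hd'.le hϑ1.le
  have hθd'0 : 0 < ϑ * bdist G (f x) := by positivity
  obtain ⟨c₀, hc₀, hgbil⟩ := hbil (f x) hfx
  refine ⟨c₀ * bdist G (f x) / bdist D x, by positivity, ?_⟩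
  intro y hy z hz
  rw [Metric.mem_ball] at hy hz
  set r : ℝ := ϑ/(24*M) with hrdef
  have hr0 : 0 < r := by positivity
  have hdne : bdist D x ≠ 0 := ne_of_gt hd
  have hd'ne : bdist G (f x) ≠ 0 := ne_of_gt hd'
  have hMne : M ≠ 0 := ne_of_gt hM0
  have hLne : L ≠ 0 := ne_of_gt hL0
  have hMr : M * r = ϑ/24 := by rw [hrdef]; field_simp
  have hr24 : r ≤ 1/24 := by
    rw [hrdef, div_le_div_iff₀ (by positivity) (by norm_num)]; nlinarith
  have hxy : dist x y ≤ r * bdist D x := by rw [dist_comm]; exact le_of_lt hy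
  have hxz : dist x z ≤ r * bdist D x := by rw [dist_comm]; exact le_of_lt hz
  -- Step A
  have keyA : ∀ w : E, dist x w ≤ r * bdist D x →
      w ∈ D ∧ (1 - r) * bdist D x ≤ bdist D w ∧ bdist D w ≤ 2 * bdist D x ∧
        dist (f x) (f w) ≤ ϑ/6 * bdist G (f x) := by
    intro w hw
    have hwd : dist x w < bdist D x := lt_of_le_of_lt hw (by nlinarith)
    have hwD : w ∈ D := ball_bdist_subset hD hx (by rw [Metric.mem_ball, dist_comm]; exact hwd)
    have hb1 : (1 - r) * bdist D x ≤ bdist D w := by nlinarith [bdist_le D x w]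
    have hb2 : bdist D w ≤ 2 * bdist D x := by
      have h1 := bdist_le D w x
      rw [dist_comm] at h1
      nlinarith
    obtain ⟨hne, hupp⟩ := qh_segment hD hx hwd
    have hKG : qhDist G (f x) (f w) ≤ ϑ/12 := by
      have hq2 := (hqh x hx w hwD).2
      have hbound : qhDist D x w ≤ r / (1 - r) := by
        refine hupp.trans ?_
        rw [div_le_div_iff₀ (by nlinarith) (by nlinarith)]
        nlinarith
      have h3 : M * (r / (1 - r)) ≤ ϑ/12 := by
        rw [mul_div_assoc', div_le_iff₀ (by nlinarith), hMr]
        nlinarith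
      nlinarith
    refine ⟨hwD, hb1, hb2, ?_⟩
    rcases eq_empty_or_nonempty (qhCurves G (f x) (f w)) with hemp | hneG
    · have hzero : qhDist G (f x) (f w) = 0 := by rw [qhDist_eq, hemp, Real.sInf_empty]
      have h1 := (hqh x hx w hwD).1
      rw [hzero, div_le_iff₀ hM0, zero_mul] at h1
      have hlog := qh_log_lower hD hx hne
      have hxw0 : dist x w = 0 := by
        by_contra hc
        have hdp : 0 < dist x w := lt_of_le_of_ne dist_nonneg (Ne.symm hc)
        have hlp : 0 < Real.log (1 + dist x w / bdist D x) :=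
          Real.log_pos (by nlinarith [div_pos hdp hd])
        linarith
      have hwx : w = x := by rw [dist_eq_zero] at hxw0; exact hxw0.symm
      rw [hwx, dist_self]
      positivity
    · have hlogG := qh_log_lower hG hfx hneG
      have hcomb : Real.log (1 + dist (f x) (f w) / bdist G (f x)) ≤ ϑ/12 :=
        le_trans hlogG hKG
      rw [Real.log_le_iff_le_exp (by positivity)] at hcomb
      have hexp : Real.exp (ϑ/12) ≤ 1 + 2*(ϑ/12) :=
        exp_le_one_add_two_mul' (by positivity) (by linarith)
      have hdiv : dist (f x) (f w) / bdist G (f x) ≤ ϑ/6 := by linarith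
      rw [div_le_iff₀ hd'] at hdiv
      linarith
  obtain ⟨hyD, hby1, hby2, hfxy⟩ := keyA y hxy
  obtain ⟨hzD, hbz1, hbz2, hfxz⟩ := keyA z hxz
  have hfyG : f y ∈ G := hf.1.mapsTo hyD
  have hfzG : f z ∈ G := hf.1.mapsTo hzD
  have hbfy : 0 < bdist G (f y) := bdist_pos hG hfyG
  -- distance of images to the center ball
  have hfyball : f y ∈ Metric.ball (f x) (ϑ * bdist G (f x)) := by
    rw [Metric.mem_ball, dist_comm]
    calc dist (f x) (f y) ≤ ϑ/6 * bdist G (f x) := hfxy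
      _ < ϑ * bdist G (f x) := by linarith [hθd'0]
  have hfzball : f z ∈ Metric.ball (f x) (ϑ * bdist G (f x)) := by
    rw [Metric.mem_ball, dist_comm]
    calc dist (f x) (f z) ≤ ϑ/6 * bdist G (f x) := hfxz
      _ < ϑ * bdist G (f x) := by linarith [hθd'0]
  -- bdist bounds at f y
  have hbfy2 : bdist G (f y) ≤ 2 * bdist G (f x) := by
    have h1 := bdist_le G (f y) (f x)
    rw [dist_comm] at h1
    linarith [hθd', hfxy]
  have hbfy1 : 5/6 * bdist G (f x) ≤ bdist G (f y) := by
    have h1 := bdist_le G (f x) (f y)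
    linarith [hθd', hfxy]
  -- Step B: distances between y z
  have huyz : dist y z ≤ 2 * (r * bdist D x) := by
    calc dist y z ≤ dist y x + dist x z := dist_triangle y x z
      _ = dist x y + dist x z := by rw [dist_comm]
      _ ≤ 2 * (r * bdist D x) := by linarith
  have h24 : r * bdist D x ≤ 1/24 * bdist D x := mul_le_mul_of_nonneg_right hr24 hd.le
  have hyzlt : dist y z < bdist D y := by
    have hexp : (1 - r) * bdist D x = bdist D x - r * bdist D x := by ring
    linarith [hby1, huyz, h24, hd, hexp.le, hexp.ge]
  obtain ⟨hneDyz, huppDyz⟩ := qh_segment hD hyD hyzlt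
  -- upper bound on M * qhDist D y z, proportional and absolute
  have hqD_prop : M * qhDist D y z ≤ 2*M/(bdist D x) * dist y z := by
    have hden : (1 - 3*r) * bdist D x ≤ bdist D y - dist y z := by
      have e1 : (1 - 3*r) * bdist D x = bdist D x - 3*(r*bdist D x) := by ring
      have e2 : (1 - r) * bdist D x = bdist D x - r * bdist D x := by ring
      linarith [hby1, huyz]
    have h1 : qhDist D y z ≤ dist y z / ((1 - 3*r) * bdist D x) := by
      refine huppDyz.trans ?_
      apply div_le_div_of_nonneg_left dist_nonneg ?_ hden
      have e1 : (1 - 3*r) * bdist D x = bdist D x - 3*(r*bdist D x) := by ring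
      linarith [h24, hd]
    have h2 : dist y z / ((1 - 3*r) * bdist D x) ≤ 2 * dist y z / bdist D x := by
      rw [div_le_div_iff₀ ?pos (by positivity)]
      case pos =>
        have e1 : (1 - 3*r) * bdist D x = bdist D x - 3*(r*bdist D x) := by ring
        linarith [h24, hd]
      linarith [mul_nonneg (mul_nonneg (show (0:ℝ) ≤ 1 - 6*r by linarith)
        (dist_nonneg (x := y) (y := z))) hd.le]
    have h3 : qhDist D y z ≤ 2 * dist y z / bdist D x := le_trans h1 h2
    calc M * qhDist D y z ≤ M * (2 * dist y z / bdist D x) :=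
          mul_le_mul_of_nonneg_left h3 hM0.le
      _ = 2*M/(bdist D x) * dist y z := by ring
  have hqD_abs : M * qhDist D y z ≤ ϑ/6 := by
    have : 2*M/(bdist D x) * dist y z ≤ 2*M/(bdist D x) * (2 * (r * bdist D x)) :=
      mul_le_mul_of_nonneg_left huyz (by positivity)
    have he : 2*M/(bdist D x) * (2 * (r * bdist D x)) = 4 * (M * r) := by field_simp; ring
    rw [he, hMr] at this
    linarith [hqD_prop]
  -- Step B upper bound on dist (f y) (f z)
  have hupper : dist (f y) (f z) ≤ 8*M * bdist G (f x) / bdist D x * dist y z := by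
    rcases eq_empty_or_nonempty (qhCurves G (f y) (f z)) with hemp | hneG
    · have hzero : qhDist G (f y) (f z) = 0 := by rw [qhDist_eq, hemp, Real.sInf_empty]
      have h1 := (hqh y hyD z hzD).1
      rw [hzero, div_le_iff₀ hM0, zero_mul] at h1
      have hlog := qh_log_lower hD hyD hneDyz
      have hyz0 : dist y z = 0 := by
        by_contra hc
        have hdp : 0 < dist y z := lt_of_le_of_ne dist_nonneg (Ne.symm hc)
        have hlp : 0 < Real.log (1 + dist y z / bdist D y) :=
          Real.log_pos (by nlinarith [div_pos hdp (bdist_pos hD hyD)])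
        linarith
      have hyz : y = z := by rwa [dist_eq_zero] at hyz0
      simp [hyz, dist_self]
    · have hlogG := qh_log_lower hG hfyG hneG
      have hKG2 := (hqh y hyD z hzD).2
      have hcomb : Real.log (1 + dist (f y) (f z) / bdist G (f y)) ≤ M * qhDist D y z := by
        linarith
      rw [Real.log_le_iff_le_exp (by positivity)] at hcomb
      have hexp : Real.exp (M * qhDist D y z) ≤ 1 + 2*(M * qhDist D y z) := by
        apply exp_le_one_add_two_mul'
        · exact mul_nonneg hM0.le (qhDist_nonneg D y z)
        · linarith
      have hdiv : dist (f y) (f z) / bdist G (f y) ≤ 2*(M * qhDist D y z) := by linarith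
      rw [div_le_iff₀ hbfy] at hdiv
      calc dist (f y) (f z) ≤ 2*(M * qhDist D y z) * bdist G (f y) := hdiv
        _ ≤ 2*(2*M/(bdist D x) * dist y z) * (2 * bdist G (f x)) := by
            apply mul_le_mul
            · linarith
            · exact hbfy2
            · exact hbfy.le
            · have : 0 ≤ 2*M/(bdist D x) * dist y z := by positivity
              linarith
        _ = 8*M * bdist G (f x) / bdist D x * dist y z := by field_simp; ring
  -- Step C lower bound on dist (f y) (f z)
  have hlower : dist y z * bdist G (f x) ≤ 8*M * bdist D x * dist (f y) (f z) := by
    have hfyz : dist (f y) (f z) ≤ ϑ/3 * bdist G (f x) := by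
      calc dist (f y) (f z) ≤ dist (f y) (f x) + dist (f x) (f z) := dist_triangle _ _ _
        _ = dist (f x) (f y) + dist (f x) (f z) := by rw [dist_comm (f y) (f x)]
        _ ≤ ϑ/3 * bdist G (f x) := by linarith
    have hfyzlt : dist (f y) (f z) < bdist G (f y) := by linarith [hθd', hθd'0, hbfy1, hfyz]
    obtain ⟨-, huppG⟩ := qh_segment hG hfyG hfyzlt
    have hqG : qhDist G (f y) (f z) ≤ dist (f y) (f z) / (1/2 * bdist G (f x)) := by
      refine huppG.trans ?_
      apply div_le_div_of_nonneg_left dist_nonneg (by positivity)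
      linarith [hθd', hbfy1, hfyz]
    -- lower bound on qhDist D y z
    have hlogD := qh_log_lower hD hyD hneDyz
    have hv1 : dist y z / bdist D y ≤ 1 := by
      rw [div_le_one (bdist_pos hD hyD)]; linarith [hyzlt.le]
    have hv2 : dist y z / (2 * bdist D x) ≤ dist y z / bdist D y := by
      apply div_le_div_of_nonneg_left dist_nonneg (bdist_pos hD hyD) hby2
    have hlog1 : dist y z / bdist D y / 2 ≤ Real.log (1 + dist y z / bdist D y) :=
      half_le_log_one_add' (div_nonneg dist_nonneg (bdist_pos hD hyD).le) hv1
    have hqDlow : dist y z / (4 * bdist D x) ≤ qhDist D y z := by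
      have : dist y z / (2 * bdist D x) / 2 ≤ dist y z / bdist D y / 2 := by linarith
      have he : dist y z / (2 * bdist D x) / 2 = dist y z / (4 * bdist D x) := by
        rw [div_div, show (2:ℝ) * bdist D x * 2 = 4 * bdist D x from by ring]
      linarith [hlogD, hlog1]
    have hleft := (hqh y hyD z hzD).1
    rw [div_le_iff₀ hM0] at hleft
    -- dist y z / (4 d) ≤ qhDist D y z ≤ qhDist G (f y) (f z) * M ≤ (distf/(d'/2)) * M
    have hchain : dist y z / (4 * bdist D x) ≤ dist (f y) (f z) / (1/2 * bdist G (f x)) * M := by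
      calc dist y z / (4 * bdist D x) ≤ qhDist D y z := hqDlow
        _ ≤ qhDist G (f y) (f z) * M := hleft
        _ ≤ dist (f y) (f z) / (1/2 * bdist G (f x)) * M :=
            mul_le_mul_of_nonneg_right hqG hM0.le
    have hstep := mul_le_mul_of_nonneg_right hchain
      (show (0:ℝ) ≤ 4 * bdist D x * bdist G (f x) by positivity)
    have eL : dist y z / (4 * bdist D x) * (4 * bdist D x * bdist G (f x))
        = dist y z * bdist G (f x) := by field_simp
    have eR : dist (f y) (f z) / (1/2 * bdist G (f x)) * M * (4 * bdist D x * bdist G (f x))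
        = 8 * M * bdist D x * dist (f y) (f z) := by field_simp; ring
    rw [eL, eR] at hstep
    exact hstep
  -- Step D: compose with g
  obtain ⟨hglow, hgupp⟩ := hgbil (f y) hfyball (f z) hfzball
  constructor
  · -- lower bound
    have hgoal : c₀ * bdist G (f x) / bdist D x / (20*M*L) * dist y z
        ≤ c₀ / L * dist (f y) (f z) := by
      have hkey : dist y z * bdist G (f x) * c₀ ≤ 8*M * bdist D x * dist (f y) (f z) * c₀ :=
        mul_le_mul_of_nonneg_right hlower hc₀.le
      have he1 : c₀ * bdist G (f x) / bdist D x / (20*M*L) * dist y z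
          = (dist y z * bdist G (f x) * c₀) / (20*M*L*bdist D x) := by
        field_simp
      have he2 : (8*M * bdist D x * dist (f y) (f z) * c₀) / (20*M*L*bdist D x)
          = 2/5 * (c₀ / L * dist (f y) (f z)) := by
        field_simp; ring
      have he3 : (dist y z * bdist G (f x) * c₀) / (20*M*L*bdist D x)
          ≤ (8*M * bdist D x * dist (f y) (f z) * c₀) / (20*M*L*bdist D x) := by
        apply div_le_div_of_nonneg_right hkey (by positivity)
      have hnn : 0 ≤ c₀ / L * dist (f y) (f z) := by positivity
      rw [he1]
      rw [he2] at he3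
      linarith
    calc c₀ * bdist G (f x) / bdist D x / (20*M*L) * dist y z
        ≤ c₀ / L * dist (f y) (f z) := hgoal
      _ ≤ dist ((g ∘ f) y) ((g ∘ f) z) := hglow
  · calc dist ((g ∘ f) y) ((g ∘ f) z) ≤ L * c₀ * dist (f y) (f z) := hgupp
      _ ≤ L * c₀ * (8*M * bdist G (f x) / bdist D x * dist y z) := by
          apply mul_le_mul_of_nonneg_left hupper (by positivity)
      _ ≤ 20*M*L * (c₀ * bdist G (f x) / bdist D x) * dist y z := by
          have h8 : L * c₀ * (8*M * bdist G (f x) / bdist D x * dist y z)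
              = 8*M*L * (c₀ * bdist G (f x) / bdist D x) * dist y z := by ring
          rw [h8]
          apply mul_le_mul_of_nonneg_right ?_ dist_nonneg
          apply mul_le_mul_of_nonneg_right ?_ (by positivity)
          nlinarith
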